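/- The quasi-metric space (Σ^∞, q_b) is sequentially Yoneda-complete: every left K-Cauchy sequence in (Σ^∞, q_b) has a Yoneda-limit. -/

import Mathlib

open scoped NNReal ENNReal

attribute [local instance] Classical.propDecidable

universe u

structure QuasiMetric (X : Type u) where
  d : X → X → ℝ≥0
  eq_iff : ∀ x y, (d x y = 0 ∧ d y x = 0) ↔ x = y
  triangle : ∀ x y z, d x y ≤ d x z + d z y

/-- The order on formal balls: `(x,r) ⊑ (y,s)` iff `d x y ≤ r - s` (real subtraction). -/
def BallLE {X : Type u} (d : X → X → ℝ≥0) (b c : X × ℝ≥0) : Prop :=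
  (d b.1 c.1 : ℝ) ≤ (b.2 : ℝ) - (c.2 : ℝ)

def IsUpperBound {β : Type*} (le : β → β → Prop) (D : Set β) (u : β) : Prop :=
  ∀ a ∈ D, le a u

def IsLub' {β : Type*} (le : β → β → Prop) (D : Set β) (u : β) : Prop :=
  IsUpperBound le D u ∧ ∀ v, IsUpperBound le D v → le u v

def DirectedSubset {β : Type*} (le : β → β → Prop) (D : Set β) : Prop :=
  D.Nonempty ∧ ∀ a ∈ D, ∀ b ∈ D, ∃ c ∈ D, le a c ∧ le b c

/-- `a` is way below `b`. -/
def WayBelow {β : Type*} (le : β → β → Prop) (a b : β) : Prop :=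
  ∀ D : Set β, DirectedSubset le D → ∀ s, IsLub' le D s → le b s → ∃ u ∈ D, le a u

def LeftKCauchyNet {X : Type u} {Λ : Type*} (d : X → X → ℝ≥0) (le : Λ → Λ → Prop)
    (f : Λ → X) : Prop :=
  ∀ ε : ℝ≥0, 0 < ε → ∃ a, ∀ b c, le a b → le b c → d (f b) (f c) < ε

/-- `x` is a Yoneda-limit of the net `f`: for all `y`, `d x y = inf_a sup_{b ≥ a} d (f b) y`
(computed in `ℝ≥0∞` so that the inf/sup always exist). -/
def IsYonedaLimit {X : Type u} {Λ : Type*} (d : X → X → ℝ≥0) (le : Λ → Λ → Prop)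
    (f : Λ → X) (x : X) : Prop :=
  ∀ y, (d x y : ℝ≥0∞) = ⨅ a : Λ, ⨆ b : Λ, ⨆ _ : le a b, (d (f b) y : ℝ≥0∞)

/-- Finite and infinite words over `α`: partial functions on `ℕ` with downward-closed domain. -/
def Word (α : Type u) : Type u := {f : ℕ → Option α // ∀ n, f n = none → f (n + 1) = none}

def emptyWord (α : Type u) : Word α := ⟨fun _ => none, fun _ _ => rfl⟩

/-- The prefix order on words. -/
def wpre {α : Type u} (x y : Word α) : Prop := ∀ n a, x.1 n = some a → y.1 n = some a

/-- The length of a word, in `ℕ∞`. -/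
noncomputable def wlen {α : Type u} (x : Word α) : ℕ∞ := ⨅ n ∈ {n : ℕ | x.1 n = none}, (n : ℕ∞)

/-- `pw n = 2^{-n}`, with `2^{-∞} = 0`. -/
noncomputable def pw (n : ℕ∞) : ℝ≥0 := if n = ⊤ then 0 else (2 : ℝ≥0)⁻¹ ^ n.toNat

/-- The balanced quasi-metric on words. -/
noncomputable def qb {α : Type u} (x y : Word α) : ℝ≥0 :=
  if wpre x y then pw (wlen x) - pw (wlen y) else 1

lemma word_none_up {α : Type u} (x : Word α) {m n : ℕ} (h : m ≤ n) (hm : x.1 m = none) :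
    x.1 n = none := by
  induction n with
  | zero => exact (Nat.le_zero.mp h) ▸ hm
  | succ k ih =>
    rcases Nat.lt_or_ge m (k+1) with hk | hk
    · exact x.2 k (ih (Nat.lt_succ_iff.mp hk))
    · have : m = k + 1 := le_antisymm h hk
      exact this ▸ hm

lemma wlen_le_iff {α : Type u} (x : Word α) (n : ℕ) :
    wlen x ≤ (n : ℕ∞) ↔ x.1 n = none := by
  constructor
  · intro hle
    by_contra hne
    have : ((n : ℕ∞) + 1) ≤ wlen x := by
      apply le_iInf₂
      intro m hm
      have hmn : n < m := by
        by_contra hc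
        exact hne (word_none_up x (not_lt.mp hc) hm)
      have : (n : ℕ∞) < (m : ℕ∞) := by exact_mod_cast hmn
      exact Order.add_one_le_of_lt this
    have h2 : (n : ℕ∞) + 1 ≤ (n : ℕ∞) := this.trans hle
    have h3 : ((n + 1 : ℕ) : ℕ∞) ≤ ((n : ℕ) : ℕ∞) := by push_cast; exact h2
    exact absurd (Nat.cast_le.mp h3) (by omega)
  · intro hn
    exact iInf₂_le n hn

lemma wlen_eq_top_iff {α : Type u} (x : Word α) :
    wlen x = ⊤ ↔ ∀ n, x.1 n ≠ none := by
  constructor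
  · intro ht n hn
    have := (wlen_le_iff x n).mpr hn
    rw [ht] at this
    exact absurd (top_le_iff.mp this).symm (by simp)
  · intro hall
    rw [wlen]
    rw [iInf₂_eq_top]
    intro n hn
    exact absurd hn (hall n)

lemma pw_top : pw ⊤ = 0 := by simp [pw]

lemma pw_coe (n : ℕ) : pw (n : ℕ∞) = (2 : ℝ≥0)⁻¹ ^ n := by
  simp [pw]

lemma pw_antitone {m n : ℕ∞} (h : m ≤ n) : pw n ≤ pw m := by
  rcases eq_or_ne n ⊤ with hn | hn
  · simp [hn, pw_top]
  · have hm : m ≠ ⊤ := fun hc => hn (top_le_iff.mp (hc ▸ h))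
    simp only [pw, if_neg hn, if_neg hm]
    apply pow_le_pow_of_le_one zero_le (by norm_num)
    exact ENat.toNat_le_toNat h (by simpa using hn)

lemma pw_le_one (n : ℕ∞) : pw n ≤ 1 := by
  calc pw n ≤ pw 0 := pw_antitone zero_le
    _ = 1 := by simp [pw]

lemma qb_le_one {α : Type u} (x y : Word α) : qb x y ≤ 1 := by
  rw [qb]
  split
  · exact (tsub_le_self).trans (pw_le_one _)
  · exact le_refl 1

lemma wlen_le_of_wpre {α : Type u} {x y : Word α} (h : wpre x y) : wlen x ≤ wlen y := by
  apply le_iInf₂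
  intro n hn
  rw [wlen_le_iff]
  cases hx : x.1 n with
  | none => rfl
  | some a => exact absurd (h n a hx) (by rw [hn]; simp)

lemma wpre_trans {α : Type u} {x y z : Word α} (h1 : wpre x y) (h2 : wpre y z) : wpre x z :=
  fun n a ha => h2 n a (h1 n a ha)

lemma qb_of_wpre {α : Type u} {x y : Word α} (h : wpre x y) :
    qb x y = pw (wlen x) - pw (wlen y) := if_pos h

lemma qb_lt_one {α : Type u} {x y : Word α} (h : qb x y < 1) : wpre x y := by
  by_contra hc
  rw [qb, if_neg hc] at h
  exact lt_irrefl 1 h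

theorem stmt7 {α : Type u} (f : ℕ → Word α) (h : LeftKCauchyNet qb (· ≤ ·) f) :
    ∃ x : Word α, IsYonedaLimit qb (· ≤ ·) f x := by
  obtain ⟨N, hN⟩ := h 1 one_pos
  have hchain : ∀ b c, N ≤ b → b ≤ c → wpre (f b) (f c) :=
    fun b c hb hbc => qb_lt_one (hN b c hb hbc)
  -- the candidate limit word
  set xf : ℕ → Option α := fun n =>
    if hn : ∃ b, N ≤ b ∧ ((f b).1 n).isSome then (f hn.choose).1 n else none with hxf
  have hx_agree : ∀ b n c, N ≤ b → (f b).1 n = some c → xf n = some c := by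
    intro b n c hb hbc
    have hex : ∃ b', N ≤ b' ∧ ((f b').1 n).isSome := ⟨b, hb, by rw [hbc]; rfl⟩
    have hch := hex.choose_spec
    obtain ⟨c', hc'⟩ := Option.isSome_iff_exists.mp hch.2
    rcases le_total b hex.choose with hle | hle
    · have := hchain b hex.choose hb hle n c hbc
      simp only [hxf, dif_pos hex]
      exact this
    · have := hchain hex.choose b hch.1 hle n c' hc'
      rw [hbc] at this
      simp only [hxf, dif_pos hex]
      rw [hc', this]
  have hx_some_inv : ∀ n c, xf n = some c → ∃ b, N ≤ b ∧ (f b).1 n = some c := by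
    intro n c hc
    simp only [hxf] at hc
    split at hc
    · next hex => exact ⟨hex.choose, hex.choose_spec.1, hc⟩
    · exact absurd hc (by simp)
  have hx_dc : ∀ n, xf n = none → xf (n + 1) = none := by
    intro n hn
    cases hs : xf (n + 1) with
    | none => rfl
    | some c =>
      obtain ⟨b, hb, hbc⟩ := hx_some_inv (n+1) c hs
      cases hbn : (f b).1 n with
      | none => rw [(f b).2 n hbn] at hbc; exact absurd hbc (by simp)
      | some c' => rw [hx_agree b n c' hb hbn] at hn; exact absurd hn (by simp)
  set x : Word α := ⟨xf, hx_dc⟩ with hxdef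
  have hfx : ∀ b, N ≤ b → wpre (f b) x := fun b hb n c hc => hx_agree b n c hb hc
  have hstab : ∀ n c, x.1 n = some c → ∃ b0, N ≤ b0 ∧ ∀ b, b0 ≤ b → (f b).1 n = some c := by
    intro n c hc
    obtain ⟨b, hb, hbc⟩ := hx_some_inv n c hc
    exact ⟨b, hb, fun b' hb' => hchain b b' hb hb' n c hbc⟩
  -- lemma C : we can find elements of the sequence with length at least any n ≤ wlen x
  have hlenC : ∀ n : ℕ, (n : ℕ∞) ≤ wlen x → ∀ a : ℕ, ∃ b, a ≤ b ∧ N ≤ b ∧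
      (n : ℕ∞) ≤ wlen (f b) := by
    intro n hn a
    cases n with
    | zero => exact ⟨max a N, le_max_left _ _, le_max_right _ _, by simp⟩
    | succ m =>
      have hxm : x.1 m ≠ none := by
        intro hc
        have := (wlen_le_iff x m).mpr hc
        have h2 : ((m+1 : ℕ) : ℕ∞) ≤ (m : ℕ∞) := hn.trans this
        exact absurd (by exact_mod_cast h2 : m + 1 ≤ m) (by omega)
      obtain ⟨c, hc⟩ := Option.ne_none_iff_exists'.mp hxm
      obtain ⟨b0, hb0N, hb0⟩ := hstab m c hc
      refine ⟨max a b0, le_max_left _ _, hb0N.trans (le_max_right _ _), ?_⟩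
      have hfb : (f (max a b0)).1 m = some c := hb0 _ (le_max_right _ _)
      by_contra hcon
      have : wlen (f (max a b0)) ≤ (m : ℕ∞) := by
        have hlt : wlen (f (max a b0)) < ((m+1 : ℕ) : ℕ∞) := not_le.mp hcon
        have : wlen (f (max a b0)) < (m : ℕ∞) + 1 := by exact_mod_cast hlt
        exact Order.le_of_lt_add_one this
      rw [wlen_le_iff] at this
      rw [this] at hfb
      exact absurd hfb (by simp)
  -- lemma B : pw (wlen (f a)) eventually approaches pw (wlen x) from above
  have hB : ∀ ε : ℝ≥0, 0 < ε → ∃ a, N ≤ a ∧ pw (wlen (f a)) ≤ pw (wlen x) + ε := by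
    intro ε hε
    have hε2 : 0 < ε / 2 := by positivity
    obtain ⟨a0, ha0⟩ := h (ε/2) hε2
    set a := max a0 N with hadef
    refine ⟨a, le_max_right _ _, ?_⟩
    -- choose n ≤ wlen x with pw n ≤ pw (wlen x) + ε/2
    have hpick : ∃ n : ℕ, (n : ℕ∞) ≤ wlen x ∧ pw (n : ℕ∞) ≤ pw (wlen x) + ε / 2 := by
      rcases eq_or_ne (wlen x) ⊤ with ht | ht
      · obtain ⟨n, hn⟩ := exists_pow_lt_of_lt_one hε2 (by rw [← NNReal.coe_lt_coe]; norm_num : (2:ℝ≥0)⁻¹ < 1)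
        exact ⟨n, ht ▸ le_top, by rw [pw_coe, ht, pw_top, zero_add]; exact hn.le⟩
      · refine ⟨(wlen x).toNat, ?_, ?_⟩
        · rw [ENat.coe_toNat ht]
        · rw [ENat.coe_toNat ht]; exact le_add_of_le_of_nonneg le_rfl zero_le
    obtain ⟨n, hnx, hpwn⟩ := hpick
    obtain ⟨b, hab, hNb, hnb⟩ := hlenC n hnx a
    have hcauchy : qb (f a) (f b) < ε / 2 := ha0 a b (le_max_left _ _) hab
    have hpre : wpre (f a) (f b) := hchain a b (le_max_right _ _) hab
    rw [qb_of_wpre hpre] at hcauchy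
    have hle : pw (wlen (f b)) ≤ pw (wlen (f a)) := pw_antitone (wlen_le_of_wpre hpre)
    have h1 : pw (wlen (f a)) < ε / 2 + pw (wlen (f b)) := by
      rwa [tsub_lt_iff_right hle] at hcauchy
    have h2 : pw (wlen (f b)) ≤ pw (n : ℕ∞) := pw_antitone hnb
    calc pw (wlen (f a)) ≤ ε / 2 + pw (n : ℕ∞) := h1.le.trans (by gcongr)
      _ ≤ ε / 2 + (pw (wlen x) + ε / 2) := by gcongr
      _ = pw (wlen x) + ε := by rw [add_comm, add_assoc, add_halves]
  refine ⟨x, fun y => ?_⟩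
  by_cases hxy : wpre x y
  · -- x is a prefix of y
    have hs : pw (wlen y) ≤ pw (wlen x) := pw_antitone (wlen_le_of_wpre hxy)
    have hqb : qb x y = pw (wlen x) - pw (wlen y) := qb_of_wpre hxy
    have hfb : ∀ b, N ≤ b → qb (f b) y = pw (wlen (f b)) - pw (wlen y) :=
      fun b hb => qb_of_wpre (wpre_trans (hfx b hb) hxy)
    have hmono_pw : ∀ b, N ≤ b → pw (wlen x) ≤ pw (wlen (f b)) :=
      fun b hb => pw_antitone (wlen_le_of_wpre (hfx b hb))
    apply le_antisymm
    · apply le_iInf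
      intro a
      refine le_iSup₂_of_le (max a N) (le_max_left _ _) ?_
      rw [ENNReal.coe_le_coe, hqb, hfb _ (le_max_right _ _)]
      exact tsub_le_tsub_right (hmono_pw _ (le_max_right _ _)) _
    · apply ENNReal.le_of_forall_pos_le_add
      intro ε hε _
      obtain ⟨a, hNa, ha⟩ := hB ε hε
      refine (iInf_le _ a).trans ?_
      apply iSup₂_le
      intro b hab
      have hNb : N ≤ b := hNa.trans hab
      rw [← ENNReal.coe_add, ENNReal.coe_le_coe, hfb b hNb, hqb]
      have hba : pw (wlen (f b)) ≤ pw (wlen (f a)) :=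
        pw_antitone (wlen_le_of_wpre (hchain a b hNa hab))
      calc pw (wlen (f b)) - pw (wlen y) ≤ (pw (wlen x) + ε) - pw (wlen y) :=
            tsub_le_tsub_right (hba.trans ha) _
        _ = (pw (wlen x) - pw (wlen y)) + ε := by
            rw [tsub_add_eq_add_tsub hs]
  · -- x is not a prefix of y
    have hqb : qb x y = 1 := if_neg hxy
    rw [wpre] at hxy
    push_neg at hxy
    obtain ⟨n, c, hxc, hyc⟩ := hxy
    obtain ⟨b0, hb0N, hb0⟩ := hstab n c hxc
    have hone : ∀ b, b0 ≤ b → qb (f b) y = 1 := by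
      intro b hb
      apply if_neg
      intro hp
      exact hyc (hp n c (hb0 b hb))
    apply le_antisymm
    · apply le_iInf
      intro a
      refine le_iSup₂_of_le (max a b0) (le_max_left _ _) ?_
      rw [ENNReal.coe_le_coe, hqb, hone _ (le_max_right _ _)]
    · refine (iInf_le _ 0).trans ?_
      apply iSup₂_le
      intro b _
      rw [hqb]
      exact_mod_cast qb_le_one (f b) y
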